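/- Let b_k (k ≥ 0) be the number of closed walks of length 2k at the root of the (q+1)-regular tree (allowing intermediate visits to the root, with b_0 = 1). Then for real s with |s| < 1/(q+1), Σ_{k≥0} b_k s^{2k} = ((q+1)√(1−4qs²) − q + 1) / (2(1 − (q+1)² s²)). -/

import Mathlib

/-- Vertices of the infinite (q+1)-regular tree: reduced words over an alphabet of
q+1 letters, i.e. lists with no two consecutive letters equal. The root is the
empty word; each vertex is adjacent to its extensions by one letter and (if
nonempty) to the word with its first letter removed, giving degree q+1. -/
def TreeV (q : ℕ) : Type := {l : List (Fin (q + 1)) // l.Chain' (· ≠ ·)}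

/-- The root of the (q+1)-regular tree. -/
def treeRoot (q : ℕ) : TreeV q := ⟨[], List.isChain_nil⟩

/-- Adjacency in the (q+1)-regular tree: one word is obtained from the other by
prepending a single letter. -/
def treeAdj (q : ℕ) (x y : TreeV q) : Prop :=
  (∃ a : Fin (q + 1), y.val = a :: x.val) ∨ (∃ a : Fin (q + 1), x.val = a :: y.val)

/-- Number of closed walks of length n in the (q+1)-regular tree starting and
ending at the root. -/
noncomputable def closedWalkCount (q n : ℕ) : ℕ :=
  Nat.card {f : Fin (n + 1) → TreeV q //
    f 0 = treeRoot q ∧ f (Fin.last n) = treeRoot q ∧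
    ∀ i : Fin n, treeAdj q (f i.castSucc) (f i.succ)}

/-- Number of closed walks of length 2k at the root of the (q+1)-regular tree that
do not visit the root at any intermediate step. -/
noncomputable def nonReturningWalkCount (q k : ℕ) : ℕ :=
  Nat.card {f : Fin (2 * k + 1) → TreeV q //
    f 0 = treeRoot q ∧ f (Fin.last (2 * k)) = treeRoot q ∧
    (∀ i : Fin (2 * k), treeAdj q (f i.castSucc) (f i.succ)) ∧
    ∀ i : Fin (2 * k + 1), i ≠ 0 → i ≠ Fin.last (2 * k) → f i ≠ treeRoot q}

/-- walks of length n from root to x -/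
def Walks (q n : ℕ) (x : TreeV q) : Type :=
  {f : Fin (n + 1) → TreeV q //
    f 0 = treeRoot q ∧ f (Fin.last n) = x ∧
    ∀ i : Fin n, treeAdj q (f i.castSucc) (f i.succ)}

lemma closedWalkCount_eq (q n : ℕ) :
    closedWalkCount q n = Nat.card (Walks q n (treeRoot q)) := rfl

/-- number of walks of length n from the root to a fixed vertex of depth d -/
def uc (q : ℕ) : ℕ → ℕ → ℕ
  | 0, 0 => 1
  | 0, _ + 1 => 0
  | n + 1, 0 => (q + 1) * uc q n 1
  | n + 1, d + 1 => uc q n d + q * uc q n (d + 2)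

/-- penultimate vertex of a walk of positive length -/
def penult {q n : ℕ} {x : TreeV q} (w : Walks q (n + 1) x) : TreeV q :=
  w.val (Fin.last n).castSucc

lemma penult_adj {q n : ℕ} {x : TreeV q} (w : Walks q (n + 1) x) :
    treeAdj q (penult w) x := by
  have h := w.prop.2.2 (Fin.last n)
  rwa [Fin.succ_last, w.prop.2.1] at h

def fiberEquiv (q n : ℕ) (x y : TreeV q) (hy : treeAdj q y x) :
    {w : Walks q (n + 1) x // penult w = y} ≃ Walks q n y where
  toFun w := ⟨fun i => w.val.val i.castSucc, by
    refine ⟨?_, ?_, ?_⟩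
    · show w.val.val (0 : Fin (n+1)).castSucc = treeRoot q
      rw [Fin.castSucc_zero]; exact w.val.prop.1
    · exact w.prop
    · intro i
      have h := w.val.prop.2.2 i.castSucc
      show treeAdj q (w.val.val i.castSucc.castSucc) (w.val.val i.succ.castSucc)
      rwa [Fin.succ_castSucc] at h⟩
  invFun g := ⟨⟨Fin.snoc g.val x, by
    refine ⟨?_, ?_, ?_⟩
    · rw [show (0 : Fin (n + 2)) = Fin.castSucc 0 by simp, Fin.snoc_castSucc]
      exact g.prop.1
    · rw [Fin.snoc_last]
    · intro i
      induction i using Fin.lastCases with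
      | last =>
        rw [Fin.succ_last, Fin.snoc_last, Fin.snoc_castSucc, g.prop.2.1]
        exact hy
      | cast j =>
        rw [Fin.succ_castSucc, Fin.snoc_castSucc, Fin.snoc_castSucc]
        exact g.prop.2.2 j⟩, by
    simp only [penult, Fin.snoc_castSucc]
    exact g.prop.2.1⟩
  left_inv w := by
    apply Subtype.ext; apply Subtype.ext
    funext i
    induction i using Fin.lastCases with
    | last =>
      simp only [Fin.snoc_last]
      exact (w.val.prop.2.1).symm
    | cast j =>
      simp only [Fin.snoc_castSucc]
  right_inv g := by
    apply Subtype.ext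
    funext i
    simp only [Fin.snoc_castSucc]

def Nbr (q : ℕ) (x : TreeV q) : Type := {y : TreeV q // treeAdj q y x}

def walksSuccEquiv (q n : ℕ) (x : TreeV q) :
    Walks q (n + 1) x ≃ Σ y : Nbr q x, Walks q n y.val :=
  (Equiv.sigmaFiberEquiv
      (fun w : Walks q (n + 1) x => (⟨penult w, penult_adj w⟩ : Nbr q x))).symm.trans
    (Equiv.sigmaCongrRight fun y =>
      (Equiv.subtypeEquivRight fun w => Subtype.ext_iff).trans
        (fiberEquiv q n x y.val y.prop))

lemma treeRoot_val (q : ℕ) : (treeRoot q).val = [] := rfl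

/-- neighbors of the root -/
def nbrRootEquiv (q : ℕ) : Nbr q (treeRoot q) ≃ Fin (q + 1) where
  toFun y := y.val.val.headI
  invFun a := ⟨⟨[a], List.isChain_singleton a⟩, Or.inr ⟨a, rfl⟩⟩
  left_inv y := by
    have h : ∃ a, y.val.val = [a] := by
      rcases y.prop with ⟨a, ha⟩ | ⟨a, ha⟩
      · exact absurd ha (by simp [treeRoot_val])
      · exact ⟨a, by simpa [treeRoot_val] using ha⟩
    obtain ⟨a, ha⟩ := h
    apply Subtype.ext; apply Subtype.ext
    simp [ha]
  right_inv a := rfl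

/-- neighbors of a non-root vertex `b :: t` -/
def nbrConsEquiv (q : ℕ) (b : Fin (q + 1)) (t : List (Fin (q + 1)))
    (hx : (b :: t).Chain' (· ≠ ·)) :
    Nbr q ⟨b :: t, hx⟩ ≃ Option {a : Fin (q + 1) // a ≠ b} where
  toFun y := if h : y.val.val = t then none else
    some ⟨y.val.val.headI, by
      rcases y.prop with ⟨a, ha⟩ | ⟨a, ha⟩
      · exact absurd (by simpa using ha.symm : a = b ∧ y.val.val = t).2 h
      · have hcons : y.val.val = a :: b :: t := by simpa using ha
        have hchain := y.val.prop
        rw [hcons] at hchain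
        rw [hcons]
        exact (List.isChain_cons_cons.mp hchain).1⟩
  invFun o := match o with
    | none => ⟨⟨t, hx.tail⟩, Or.inl ⟨b, rfl⟩⟩
    | some ⟨a, ha⟩ => ⟨⟨a :: b :: t, List.isChain_cons_cons.mpr ⟨ha, hx⟩⟩, Or.inr ⟨a, rfl⟩⟩
  left_inv y := by
    by_cases h : y.val.val = t
    · simp only [h, dif_pos]
      apply Subtype.ext; apply Subtype.ext
      exact h.symm
    · simp only [h, dif_neg]
      have hcons : ∃ a, y.val.val = a :: b :: t := by
        rcases y.prop with ⟨a, ha⟩ | ⟨a, ha⟩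
        · exact absurd (by simpa using ha.symm : a = b ∧ y.val.val = t).2 h
        · exact ⟨a, by simpa using ha⟩
      obtain ⟨a, ha⟩ := hcons
      apply Subtype.ext; apply Subtype.ext
      simp [ha]
  right_inv o := by
    match o with
    | none => simp
    | some ⟨a, ha⟩ =>
      have hne : (a :: b :: t : List (Fin (q+1))) ≠ t := by
        intro hcontra
        have := congrArg List.length hcontra
        simp at this; omega
      simp only [hne, dif_neg]
      simp

lemma walks_finite_card (q : ℕ) : ∀ (n : ℕ) (x : TreeV q),
    Finite (Walks q n x) ∧ Nat.card (Walks q n x) = uc q n x.val.length := by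
  intro n
  induction n with
  | zero =>
    rintro ⟨l, hl⟩
    cases l with
    | nil =>
      have hx : (⟨[], hl⟩ : TreeV q) = treeRoot q := Subtype.ext rfl
      rw [hx]
      have hsub : Subsingleton (Walks q 0 (treeRoot q)) := by
        constructor
        intro a b
        apply Subtype.ext; funext i
        have hi : i = 0 := Fin.ext (by omega)
        rw [hi, a.prop.1, b.prop.1]
      have hne : Nonempty (Walks q 0 (treeRoot q)) :=
        ⟨⟨fun _ => treeRoot q, rfl, rfl, fun i => i.elim0⟩⟩
      haveI := hsub
      constructor
      · exact Finite.of_subsingleton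
      · exact Nat.card_eq_one_iff_unique.mpr ⟨hsub, hne⟩
    | cons b t =>
      have hempty : IsEmpty (Walks q 0 (⟨b :: t, hl⟩ : TreeV q)) := by
        constructor
        intro w
        have h1 : w.val (Fin.last 0) = w.val 0 := congrArg w.val (Fin.ext rfl : Fin.last 0 = 0)
        have h2 := w.prop.2.1
        rw [h1, w.prop.1] at h2
        have := congrArg (fun z : TreeV q => z.val) h2
        simp [treeRoot] at this
      haveI := hempty
      exact ⟨Finite.of_subsingleton, by simp [Nat.card_of_isEmpty, uc]⟩
  | succ n ih =>
    rintro ⟨l, hl⟩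
    cases l with
    | nil =>
      have hx : (⟨[], hl⟩ : TreeV q) = treeRoot q := Subtype.ext rfl
      rw [hx]
      have E : Walks q (n + 1) (treeRoot q) ≃
          Σ a : Fin (q + 1), Walks q n ⟨[a], List.isChain_singleton a⟩ :=
        (walksSuccEquiv q n (treeRoot q)).trans
          (Equiv.sigmaCongrLeft (β := fun y : Nbr q (treeRoot q) => Walks q n y.val)
            (nbrRootEquiv q).symm).symm
      haveI : ∀ a : Fin (q + 1), Fintype (Walks q n (⟨[a], List.isChain_singleton a⟩ : TreeV q)) :=
        fun a => @Fintype.ofFinite _ (ih _).1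
      constructor
      · exact Finite.of_equiv _ E.symm
      · rw [Nat.card_congr E, Nat.card_eq_fintype_card, Fintype.card_sigma]
        have hcard : ∀ a : Fin (q + 1),
            Fintype.card (Walks q n (⟨[a], List.isChain_singleton a⟩ : TreeV q)) = uc q n 1 := by
          intro a
          rw [← Nat.card_eq_fintype_card]
          exact (ih _).2
        rw [Finset.sum_congr rfl fun a _ => hcard a]
        simp [uc, Finset.sum_const, mul_comm, treeRoot_val]
    | cons b t =>
      have E : Walks q (n + 1) (⟨b :: t, hl⟩ : TreeV q) ≃
          Σ o : Option {a : Fin (q + 1) // a ≠ b},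
            Walks q n ((nbrConsEquiv q b t hl).symm o).val :=
        (walksSuccEquiv q n _).trans
          (Equiv.sigmaCongrLeft (β := fun y : Nbr q ⟨b :: t, hl⟩ => Walks q n y.val)
            (nbrConsEquiv q b t hl).symm).symm
      haveI : ∀ o : Option {a : Fin (q + 1) // a ≠ b},
          Fintype (Walks q n ((nbrConsEquiv q b t hl).symm o).val) :=
        fun o => @Fintype.ofFinite _ (ih _).1
      constructor
      · exact Finite.of_equiv _ E.symm
      · rw [Nat.card_congr E, Nat.card_eq_fintype_card, Fintype.card_sigma,
          Fintype.sum_option]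
        have h0 : Fintype.card (Walks q n ((nbrConsEquiv q b t hl).symm none).val)
            = uc q n t.length := by
          rw [← Nat.card_eq_fintype_card]
          exact (ih _).2
        have h1 : ∀ a : {a : Fin (q + 1) // a ≠ b},
            Fintype.card (Walks q n ((nbrConsEquiv q b t hl).symm (some a)).val)
            = uc q n (t.length + 2) := by
          rintro ⟨a, ha⟩
          rw [← Nat.card_eq_fintype_card]
          exact (ih _).2
        rw [h0, Finset.sum_congr rfl fun a _ => h1 a]
        have hq : Fintype.card {a : Fin (q + 1) // a ≠ b} = q := by
          simp [Fintype.card_subtype_compl]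
        simp only [Finset.sum_const, Finset.card_univ, hq, smul_eq_mul]
        show uc q (n + 1) (t.length + 1) = _
        simp [uc]

lemma uc_zero_zero (q : ℕ) : uc q 0 0 = 1 := rfl
lemma uc_zero_succ (q d : ℕ) : uc q 0 (d + 1) = 0 := rfl
lemma uc_succ_zero (q n : ℕ) : uc q (n + 1) 0 = (q + 1) * uc q n 1 := rfl
lemma uc_succ_succ (q n d : ℕ) : uc q (n + 1) (d + 1) = uc q n d + q * uc q n (d + 2) := rfl

lemma uc_odd (q : ℕ) : ∀ n d, (n + d) % 2 = 1 → uc q n d = 0 := by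
  intro n
  induction n with
  | zero =>
    intro d hd
    cases d with
    | zero => omega
    | succ d => rfl
  | succ n ih =>
    intro d hd
    cases d with
    | zero => rw [uc_succ_zero, ih 1 (by omega)]; ring
    | succ d => rw [uc_succ_succ, ih d (by omega), ih (d + 2) (by omega)]; ring

lemma uc_le (q : ℕ) : ∀ n d, uc q n d ≤ (q + 1) ^ n := by
  intro n
  induction n with
  | zero =>
    intro d
    cases d with
    | zero => exact le_refl 1
    | succ d => exact Nat.zero_le _
  | succ n ih =>
    intro d
    cases d with
    | zero =>
      rw [uc_succ_zero, pow_succ]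
      calc (q + 1) * uc q n 1 ≤ (q + 1) * (q + 1) ^ n := Nat.mul_le_mul_left _ (ih 1)
      _ = (q + 1) ^ n * (q + 1) := by ring
    | succ d =>
      rw [uc_succ_succ]
      calc uc q n d + q * uc q n (d + 2) ≤ (q + 1) ^ n + q * (q + 1) ^ n :=
        Nat.add_le_add (ih d) (Nat.mul_le_mul_left _ (ih _))
      _ = (q + 1) ^ (n + 1) := by ring

set_option maxHeartbeats 1000000 in
lemma main_aux (q : ℕ) (hq : 1 ≤ q) (s : ℝ) (hs : |s| < 1 / ((q : ℝ) + 1)) (hs0 : s ≠ 0) :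
    ∑' n : ℕ, (uc q n 0 : ℝ) * s ^ n =
      (((q : ℝ) + 1) * Real.sqrt (1 - 4 * q * s ^ 2) - q + 1) /
        (2 * (1 - ((q : ℝ) + 1) ^ 2 * s ^ 2)) := by
  have hQ0 : (0 : ℝ) < (q : ℝ) + 1 := by positivity
  have hq1 : (1 : ℝ) ≤ (q : ℝ) := by exact_mod_cast hq
  have hq0 : (0 : ℝ) < (q : ℝ) := by linarith
  have habs : ((q : ℝ) + 1) * |s| < 1 := by
    rw [lt_div_iff₀ hQ0] at hs; linarith [hs]
  have habs0 : (0 : ℝ) ≤ ((q : ℝ) + 1) * |s| := by positivity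
  have hsa : 0 < |s| := abs_pos.mpr hs0
  have hb : ∀ d n, ‖(uc q n d : ℝ) * s ^ n‖ ≤ (((q : ℝ) + 1) * |s|) ^ n := by
    intro d n
    rw [norm_mul, norm_pow, Real.norm_eq_abs, Real.norm_eq_abs,
      abs_of_nonneg (by positivity : (0 : ℝ) ≤ (uc q n d : ℝ)), mul_pow]
    have h1 : (uc q n d : ℝ) ≤ ((q : ℝ) + 1) ^ n := by exact_mod_cast uc_le q n d
    exact mul_le_mul_of_nonneg_right h1 (by positivity)
  have hsum : ∀ d, Summable (fun n => (uc q n d : ℝ) * s ^ n) :=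
    fun d => Summable.of_norm_bounded (summable_geometric_of_lt_one habs0 habs) (hb d)
  set U : ℕ → ℝ := fun d => ∑' n, (uc q n d : ℝ) * s ^ n with hUdef
  have hbound : ∀ d, |U d| ≤ (1 - (((q : ℝ) + 1) * |s|))⁻¹ := by
    intro d
    simpa using tsum_of_norm_bounded (hasSum_geometric_of_lt_one habs0 habs) (hb d)
  have hU0 : U 0 = 1 + ((q : ℝ) + 1) * s * U 1 := by
    rw [hUdef]
    simp only
    rw [Summable.tsum_eq_zero_add (hsum 0)]
    congr 1
    · simp [uc_zero_zero]
    · rw [← tsum_mul_left]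
      apply tsum_congr
      intro n
      rw [uc_succ_zero]
      push_cast
      ring
  have hUrec : ∀ d, U (d + 1) = s * U d + (q : ℝ) * s * U (d + 2) := by
    intro d
    have h1 : U (d + 1) = ∑' n, (uc q (n + 1) (d + 1) : ℝ) * s ^ (n + 1) := by
      rw [hUdef]; simp only
      rw [Summable.tsum_eq_zero_add (hsum (d + 1))]
      simp [uc_zero_succ]
    rw [h1]
    have h2 : ∀ n : ℕ, (uc q (n + 1) (d + 1) : ℝ) * s ^ (n + 1)
        = s * ((uc q n d : ℝ) * s ^ n) + (q : ℝ) * s * ((uc q n (d + 2) : ℝ) * s ^ n) := by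
      intro n; rw [uc_succ_succ]; push_cast; ring
    rw [tsum_congr h2, Summable.tsum_add ((hsum d).mul_left s) ((hsum (d + 2)).mul_left ((q : ℝ) * s)),
      tsum_mul_left, tsum_mul_left]
  -- the square root
  have hD : 0 < 1 - 4 * (q : ℝ) * s ^ 2 := by
    have h2 : (((q : ℝ) + 1) * |s|) ^ 2 < 1 := by nlinarith [habs, habs0]
    nlinarith [h2, sq_abs s, sq_nonneg ((q : ℝ) - 1)]
  set r := Real.sqrt (1 - 4 * (q : ℝ) * s ^ 2) with hrdef
  have hr2 : r ^ 2 = 1 - 4 * (q : ℝ) * s ^ 2 := Real.sq_sqrt hD.le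
  have hr0 : 0 < r := Real.sqrt_pos.mpr hD
  have hs2 : 0 < s ^ 2 := by positivity
  have hr1 : r < 1 := by nlinarith [hr2, hr0, hs2, hq0]
  set w := (1 - r) / (2 * (q : ℝ) * s) with hwdef
  set W := (1 + r) / (2 * (q : ℝ) * s) with hWdef
  have hden : 2 * (q : ℝ) * s ≠ 0 := by
    exact mul_ne_zero (mul_ne_zero two_ne_zero (ne_of_gt hq0)) hs0
  have hw : s + (q : ℝ) * s * w ^ 2 = w := by
    rw [hwdef]; field_simp; linear_combination hr2
  have hW : s + (q : ℝ) * s * W ^ 2 = W := by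
    rw [hWdef]; field_simp; linear_combination hr2
  -- the sequence e d = U d - w^d * U 0
  set e : ℕ → ℝ := fun d => U d - w ^ d * U 0 with hedef
  have he0 : e 0 = 0 := by simp [hedef]
  have herec : ∀ d, (q : ℝ) * s * e (d + 2) = e (d + 1) - s * e d := by
    intro d
    simp only [hedef]
    rw [hUrec d]
    linear_combination (-(U 0) * w ^ d) * hw
  have hqs : (q : ℝ) * s ≠ 0 := mul_ne_zero (ne_of_gt hq0) hs0
  have hgen : ∀ d, (W - w) * e d = e 1 * (W ^ d - w ^ d) := by
    intro d
    induction d using Nat.twoStepInduction with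
    | zero => simp [he0]
    | one => ring
    | more d ih0 ih1 =>
      apply mul_left_cancel₀ hqs
      calc (q : ℝ) * s * ((W - w) * e (d + 2)) = (W - w) * ((q : ℝ) * s * e (d + 2)) := by ring
      _ = (W - w) * (e (d + 1) - s * e d) := by rw [herec d]
      _ = (W - w) * e (d + 1) - s * ((W - w) * e d) := by ring
      _ = e 1 * (W ^ (d + 1) - w ^ (d + 1)) - s * (e 1 * (W ^ d - w ^ d)) := by rw [ih1, ih0]
      _ = (q : ℝ) * s * (e 1 * (W ^ (d + 2) - w ^ (d + 2))) := by
        linear_combination (e 1 * w ^ d) * hw - (e 1 * W ^ d) * hW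
  -- |W| > 1, |w| < 1
  have habsW : |W| = (1 + r) / (2 * (q : ℝ) * |s|) := by
    rw [hWdef, abs_div, abs_of_pos (by linarith : (0:ℝ) < 1 + r), abs_mul, abs_mul,
      abs_of_pos (by norm_num : (0:ℝ) < 2), abs_of_pos hq0]
  have habsw : |w| = (1 - r) / (2 * (q : ℝ) * |s|) := by
    rw [hwdef, abs_div, abs_of_pos (by linarith : (0:ℝ) < 1 - r), abs_mul, abs_mul,
      abs_of_pos (by norm_num : (0:ℝ) < 2), abs_of_pos hq0]
  have hdpos : 0 < 2 * (q : ℝ) * |s| := by positivity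
  have hkey : 2 * (q : ℝ) * |s| < 1 + r := by
    nlinarith [hr2, hr0, hsa, hq1, habs, sq_abs s,
      sq_nonneg (((q : ℝ) + 1) * r - ((q : ℝ) - 1)), sq_nonneg (((q : ℝ) + 1) * |s| - 1)]
  have hW1 : 1 < |W| := by
    rw [habsW, lt_div_iff₀ hdpos]; linarith
  have hw1 : |w| < 1 := by
    rw [habsw, div_lt_one hdpos]
    by_contra hcon
    push_neg at hcon
    have hfac : (1 - r) * (1 + r) = 4 * (q : ℝ) * |s| ^ 2 := by
      rw [sq_abs]; linear_combination -hr2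
    nlinarith [hfac, hkey, mul_pos hq0 hsa, hq1, hsa]
  -- boundedness of e
  set M : ℝ := (1 - (((q : ℝ) + 1) * |s|))⁻¹ * 2 with hMdef
  have hM : ∀ d, |e d| ≤ M := by
    intro d
    have h1 : |e d| ≤ |U d| + |w| ^ d * |U 0| := by
      simp only [hedef]
      calc |U d - w ^ d * U 0| ≤ |U d| + |w ^ d * U 0| := abs_sub _ _
      _ = |U d| + |w| ^ d * |U 0| := by rw [abs_mul, abs_pow]
    have h2 : |w| ^ d ≤ 1 := pow_le_one₀ (abs_nonneg w) hw1.le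
    have h3 := hbound d
    have h4 := hbound 0
    have h5 : (0:ℝ) ≤ |U 0| := abs_nonneg _
    rw [hMdef]
    nlinarith [h1, h2, h3, h4, h5]
  have hM0 : 0 ≤ M := le_trans (abs_nonneg _) (hM 0)
  -- e 1 = 0
  have he1 : e 1 = 0 := by
    by_contra hne
    have hpos : 0 < |e 1| := abs_pos.mpr hne
    obtain ⟨d, hd⟩ := pow_unbounded_of_one_lt ((|W - w| * M) / |e 1| + 1) hW1
    have h2 := congrArg abs (hgen d)
    rw [abs_mul, abs_mul] at h2
    have h3 : |W| ^ d - |w| ^ d ≤ |W ^ d - w ^ d| := by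
      have h := abs_sub_abs_le_abs_sub (W ^ d) (w ^ d)
      rw [abs_pow, abs_pow] at h; linarith
    have h4 : |W| ^ d - 1 ≤ |W ^ d - w ^ d| := by
      have := pow_le_one₀ (abs_nonneg w) hw1.le (n := d)
      linarith
    have h5 : |e 1| * (|W| ^ d - 1) ≤ |W - w| * M := by
      calc |e 1| * (|W| ^ d - 1) ≤ |e 1| * |W ^ d - w ^ d| :=
        mul_le_mul_of_nonneg_left h4 (abs_nonneg _)
      _ = |W - w| * |e d| := h2.symm
      _ ≤ |W - w| * M := mul_le_mul_of_nonneg_left (hM d) (abs_nonneg _)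
    rw [div_add' _ _ _ (ne_of_gt hpos), div_lt_iff₀ hpos] at hd
    nlinarith [h5, hd, hpos]
  -- solve for U 0
  have hU1 : U 1 = w * U 0 := by
    have h := he1
    simp only [hedef, pow_one] at h
    linarith
  rw [hU1] at hU0
  have hU0eq : U 0 * (1 - ((q : ℝ) + 1) * s * w) = 1 := by linear_combination hU0
  have hcoef : 1 - ((q : ℝ) + 1) * s * w = ((q : ℝ) - 1 + ((q : ℝ) + 1) * r) / (2 * (q : ℝ)) := by
    rw [hwdef]; field_simp; ring
  have hcpos : 0 < (q : ℝ) - 1 + ((q : ℝ) + 1) * r := by nlinarith [hr0, hq1]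
  have hU0v : U 0 = 2 * (q : ℝ) / ((q : ℝ) - 1 + ((q : ℝ) + 1) * r) := by
    rw [hcoef] at hU0eq
    field_simp at hU0eq ⊢
    linarith [hU0eq]
  have hden2 : 0 < 1 - ((q : ℝ) + 1) ^ 2 * s ^ 2 := by
    nlinarith [habs, habs0, sq_abs s]
  show U 0 = _
  rw [hU0v, div_eq_div_iff (ne_of_gt hcpos) (by positivity)]
  linear_combination (-(((q : ℝ) + 1) ^ 2)) * hr2

/-- With b_k the number of closed walks of length 2k at the root of
the (q+1)-regular tree (intermediate visits to the root allowed, b_0 = 1), for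
real s with |s| < 1/(q+1),
Σ_{k≥0} b_k s^{2k} = ((q+1)√(1−4qs²) − q + 1) / (2(1 − (q+1)² s²)). -/
theorem gen_fun_closed_walks (q : ℕ) (hq : 1 ≤ q) (s : ℝ) (hs : |s| < 1 / ((q : ℝ) + 1)) :
    ∑' k : ℕ, (closedWalkCount q (2 * k) : ℝ) * s ^ (2 * k) =
      (((q : ℝ) + 1) * Real.sqrt (1 - 4 * q * s ^ 2) - q + 1) /
        (2 * (1 - ((q : ℝ) + 1) ^ 2 * s ^ 2)) := by
  have hb : ∀ n : ℕ, closedWalkCount q n = uc q n 0 := by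
    intro n
    rw [closedWalkCount_eq, (walks_finite_card q n (treeRoot q)).2]
    rfl
  by_cases hs0 : s = 0
  · subst hs0
    rw [tsum_eq_single 0 (fun k hk => by
      have h2 : 2 * k ≠ 0 := by omega
      simp [zero_pow h2])]
    have h1 : (closedWalkCount q (2 * 0) : ℝ) * (0 : ℝ) ^ (2 * 0) = 1 := by
      norm_num [hb 0, uc_zero_zero]
    rw [h1]
    rw [show (1 : ℝ) - 4 * (q : ℝ) * (0:ℝ) ^ 2 = 1 by ring, Real.sqrt_one]
    rw [show (2 : ℝ) * (1 - ((q : ℝ) + 1) ^ 2 * (0:ℝ) ^ 2) = 2 by ring]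
    rw [show ((q : ℝ) + 1) * 1 - (q : ℝ) + 1 = 2 by ring]
    norm_num
  · calc ∑' k : ℕ, (closedWalkCount q (2 * k) : ℝ) * s ^ (2 * k)
        = ∑' k : ℕ, (uc q (2 * k) 0 : ℝ) * s ^ (2 * k) :=
          tsum_congr fun k => by rw [hb]
      _ = ∑' n : ℕ, (uc q n 0 : ℝ) * s ^ n := by
          apply Function.Injective.tsum_eq (g := fun k : ℕ => 2 * k)
            (f := fun n : ℕ => (uc q n 0 : ℝ) * s ^ n)
          · intro a b hab
            simp only at hab
            omega
          · intro n hn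
            rcases Nat.even_or_odd n with he | ho
            · obtain ⟨m, hm⟩ := he
              exact ⟨m, show 2 * m = n by omega⟩
            · exfalso
              apply hn
              obtain ⟨m, hm⟩ := ho
              show (uc q n 0 : ℝ) * s ^ n = 0
              rw [uc_odd q n 0 (by omega)]
              simp
      _ = _ := main_aux q hq s hs hs0
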